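/- For every p in the order interval [u0, v0], the sequence of iterates T^n p converges uniformly on [0,1] to the unique fixed point p* of T in [u0, v0]. -/

import Mathlib

open Set Filter Topology

noncomputable def Tmap (c : ℝ → ℝ) (g : ℕ → ℝ) (δ : ℝ) (p : ℝ → ℝ) (s : ℝ) : ℝ :=
  sInf {y : ℝ | ∃ k : ℕ, ∃ t : ℝ, 1 ≤ k ∧ 0 ≤ t ∧ t ≤ s ∧
    y = c (s - t) + g k + δ * k * p (t / k)}

set_option maxHeartbeats 1000000 in
theorem iterates_converge_uniformly (c : ℝ → ℝ) (g : ℕ → ℝ) (δ : ℝ)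
(hc_diff : DifferentiableOn ℝ c (Set.Icc 0 1))
    (hc_mono : StrictMonoOn c (Set.Icc 0 1))
    (hc_conv : StrictConvexOn ℝ (Set.Icc 0 1) c)
    (hc0 : c 0 = 0) (hc'0 : 0 < deriv c 0)
    (hg_mono : StrictMonoOn g {k : ℕ | 1 ≤ k})
    (hg1 : g 1 = 0) (hg_nonneg : ∀ k : ℕ, 1 ≤ k → 0 ≤ g k)
    (hg_top : Tendsto g atTop atTop)
    (hδ : 1 < δ)
    (pstar : ℝ → ℝ)
    (hp_cont : ContinuousOn pstar (Set.Icc 0 1))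
    (hp_mem : ∀ s ∈ Set.Icc (0 : ℝ) 1, deriv c 0 * s ≤ pstar s ∧ pstar s ≤ c s)
    (hp_fix : ∀ s ∈ Set.Icc (0 : ℝ) 1, Tmap c g δ pstar s = pstar s) :
    ∀ p : ℝ → ℝ, ContinuousOn p (Set.Icc 0 1) →
      (∀ s ∈ Set.Icc (0 : ℝ) 1, deriv c 0 * s ≤ p s ∧ p s ≤ c s) →
      TendstoUniformlyOn (fun n : ℕ => (Tmap c g δ)^[n] p) pstar atTop (Set.Icc 0 1) := by
  intro p hp_cont' hpmem
  set α := deriv c 0 with hαdef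
  have hα : 0 < α := hc'0
  have hδ0 : (0:ℝ) < δ := lt_trans one_pos hδ
  have hδ1 : (1:ℝ) ≤ δ := hδ.le
  -- c is differentiable at 0 (since deriv ≠ 0)
  have hdiff0 : DifferentiableAt ℝ c 0 := by
    by_contra h
    have hz : α = 0 := by rw [hαdef, deriv_zero_of_not_differentiableAt h]
    rw [hz] at hα
    exact lt_irrefl 0 hα
  have hslope_t : Tendsto (fun x : ℝ => c x / x) (𝓝[>] (0:ℝ)) (𝓝 α) := by
    have h1 := hasDerivAt_iff_tendsto_slope.1 hdiff0.hasDerivAt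
    have h2 : (𝓝[>] (0:ℝ)) ≤ 𝓝[≠] (0:ℝ) :=
      nhdsWithin_mono _ fun x hx => ne_of_gt hx
    refine (h1.mono_left h2).congr' ?_
    filter_upwards [self_mem_nhdsWithin] with x hx
    rw [slope_def_field, hc0, sub_zero, sub_zero]
  -- slope lower bound : α * x ≤ c x on [0,1]
  have hcx : ∀ x : ℝ, 0 ≤ x → x ≤ 1 → α * x ≤ c x := by
    intro x hx0 hx1
    rcases eq_or_lt_of_le hx0 with h | h
    · simp [← h, hc0]
    · have key : α ≤ c x / x := by
        refine le_of_tendsto hslope_t ?_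
        filter_upwards [Ioo_mem_nhdsGT_of_mem (Set.mem_Ico.2 ⟨le_refl (0:ℝ), h⟩)] with u hu
        obtain ⟨hu0, hux⟩ := hu
        have hux' : u / x ≤ 1 := (div_le_one h).2 hux.le
        have hconv := hc_conv.convexOn.2 (Set.mem_Icc.2 ⟨le_refl (0:ℝ), zero_le_one⟩)
          (Set.mem_Icc.2 ⟨hx0, hx1⟩) (by linarith : (0:ℝ) ≤ 1 - u/x)
          (by positivity : (0:ℝ) ≤ u/x) (by ring)
        have hcu : c u ≤ (u/x) * c x := by
          have harg : (1 - u/x) • (0:ℝ) + (u/x) • x = u := by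
            field_simp
            simp [h.ne']
          rw [harg] at hconv
          simpa [hc0] using hconv
        rw [div_le_div_iff₀ hu0 h]
        have : (u/x) * c x * x = c x * u := by field_simp
        nlinarith [hcu]
      calc α * x = x * α := mul_comm _ _
        _ ≤ x * (c x / x) := mul_le_mul_of_nonneg_left key h.le
        _ = c x := by field_simp
  have hcpos : ∀ x : ℝ, 0 ≤ x → x ≤ 1 → 0 ≤ c x := fun x h0 h1 =>
    le_trans (mul_nonneg hα.le h0) (hcx x h0 h1)
  have hmonoC : ∀ s : ℝ, 0 ≤ s → s ≤ 1 → c s ≤ c 1 := by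
    intro s h0 h1
    rcases eq_or_lt_of_le h1 with h | h
    · rw [h]
    · exact (hc_mono (Set.mem_Icc.2 ⟨h0, h1⟩)
        (Set.mem_Icc.2 ⟨zero_le_one, le_refl (1:ℝ)⟩) h).le
  -- lower bound on the members of the defining set
  have hlb : ∀ q : ℝ → ℝ, (∀ x, 0 ≤ x → x ≤ 1 → α * x ≤ q x ∧ q x ≤ c x) →
      ∀ s : ℝ, 0 ≤ s → s ≤ 1 →
      ∀ y ∈ {y : ℝ | ∃ k : ℕ, ∃ t : ℝ, 1 ≤ k ∧ 0 ≤ t ∧ t ≤ s ∧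
        y = c (s - t) + g k + δ * k * q (t / k)}, α * s ≤ y := by
    rintro q hq s hs0 hs1 y ⟨k, t, hk, ht0, hts, rfl⟩
    have hkR : (1:ℝ) ≤ (k:ℝ) := by exact_mod_cast hk
    have hk0 : (0:ℝ) < (k:ℝ) := lt_of_lt_of_le one_pos hkR
    have htk0 : 0 ≤ t / (k:ℝ) := div_nonneg ht0 hk0.le
    have htk1 : t / (k:ℝ) ≤ 1 := le_trans (div_le_self ht0 hkR) (le_trans hts hs1)
    have h1 : α * (t/(k:ℝ)) ≤ q (t/(k:ℝ)) := (hq _ htk0 htk1).1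
    have h2 : α * (s - t) ≤ c (s - t) := hcx _ (by linarith) (by linarith)
    have h3 : 0 ≤ g k := hg_nonneg k hk
    have h4 : δ * (k:ℝ) * (α * (t/(k:ℝ))) ≤ δ * (k:ℝ) * q (t/(k:ℝ)) :=
      mul_le_mul_of_nonneg_left h1 (by positivity)
    have h5 : δ * (k:ℝ) * (α * (t/(k:ℝ))) = δ * (α * t) := by
      field_simp
    have h6 : α * t ≤ δ * (α * t) := by
      nlinarith [mul_nonneg hα.le ht0]
    rw [h5] at h4
    linarith
  have hbdd : ∀ q : ℝ → ℝ, (∀ x, 0 ≤ x → x ≤ 1 → α * x ≤ q x ∧ q x ≤ c x) →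
      ∀ s : ℝ, 0 ≤ s → s ≤ 1 →
      BddBelow {y : ℝ | ∃ k : ℕ, ∃ t : ℝ, 1 ≤ k ∧ 0 ≤ t ∧ t ≤ s ∧
        y = c (s - t) + g k + δ * k * q (t / k)} :=
    fun q hq s hs0 hs1 => ⟨α * s, fun y hy => hlb q hq s hs0 hs1 y hy⟩
  have hne : ∀ q : ℝ → ℝ, ∀ s : ℝ, 0 ≤ s →
      (c (s - 0) + g 1 + δ * ((1:ℕ):ℝ) * q (0 / ((1:ℕ):ℝ))) ∈
        {y : ℝ | ∃ k : ℕ, ∃ t : ℝ, 1 ≤ k ∧ 0 ≤ t ∧ t ≤ s ∧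
          y = c (s - t) + g k + δ * k * q (t / k)} := by
    intro q s hs0
    exact ⟨1, 0, le_rfl, le_rfl, hs0, rfl⟩
  -- q 0 = 0 for members of the order interval
  have hq00 : ∀ q : ℝ → ℝ, (∀ x, 0 ≤ x → x ≤ 1 → α * x ≤ q x ∧ q x ≤ c x) → q 0 = 0 := by
    intro q hq
    have h1 := (hq 0 le_rfl zero_le_one).1
    have h2 := (hq 0 le_rfl zero_le_one).2
    rw [hc0] at h2
    rw [mul_zero] at h1
    linarith
  -- T maps the order interval into itself
  have hub : ∀ q : ℝ → ℝ, (∀ x, 0 ≤ x → x ≤ 1 → α * x ≤ q x ∧ q x ≤ c x) →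
      ∀ s : ℝ, 0 ≤ s → s ≤ 1 → Tmap c g δ q s ≤ c s := by
    intro q hq s hs0 hs1
    have h := csInf_le (hbdd q hq s hs0 hs1) (hne q s hs0)
    have hq0 : q 0 = 0 := hq00 q hq
    simp only [Nat.cast_one, div_one, sub_zero, hq0, hg1, mul_zero, add_zero, mul_one] at h
    simpa [Tmap] using h
  have hlbT : ∀ q : ℝ → ℝ, (∀ x, 0 ≤ x → x ≤ 1 → α * x ≤ q x ∧ q x ≤ c x) →
      ∀ s : ℝ, 0 ≤ s → s ≤ 1 → α * s ≤ Tmap c g δ q s := by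
    intro q hq s hs0 hs1
    simp only [Tmap]
    exact le_csInf ⟨_, hne q s hs0⟩ (hlb q hq s hs0 hs1)
  have hIT : ∀ q : ℝ → ℝ, (∀ x, 0 ≤ x → x ≤ 1 → α * x ≤ q x ∧ q x ≤ c x) →
      (∀ x, 0 ≤ x → x ≤ 1 → α * x ≤ Tmap c g δ q x ∧ Tmap c g δ q x ≤ c x) :=
    fun q hq x h0 h1 => ⟨hlbT q hq x h0 h1, hub q hq x h0 h1⟩
  have hIiter : ∀ q : ℝ → ℝ, (∀ x, 0 ≤ x → x ≤ 1 → α * x ≤ q x ∧ q x ≤ c x) →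
      ∀ n : ℕ, ∀ x, 0 ≤ x → x ≤ 1 →
        α * x ≤ (Tmap c g δ)^[n] q x ∧ (Tmap c g δ)^[n] q x ≤ c x := by
    intro q hq n
    induction n with
    | zero => simpa using hq
    | succ n ih =>
      intro x h0 h1
      rw [Function.iterate_succ_apply']
      exact hIT _ ih x h0 h1
  -- Tmap only depends on values on [0,1]
  have hcongr : ∀ q r : ℝ → ℝ, (∀ x, 0 ≤ x → x ≤ 1 → q x = r x) →
      ∀ s : ℝ, 0 ≤ s → s ≤ 1 → Tmap c g δ q s = Tmap c g δ r s := by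
    intro q r hqr s hs0 hs1
    simp only [Tmap]
    congr 1
    ext y
    constructor
    · rintro ⟨k, t, hk, ht0, hts, rfl⟩
      have hkR : (1:ℝ) ≤ (k:ℝ) := by exact_mod_cast hk
      exact ⟨k, t, hk, ht0, hts, by
        rw [hqr (t/(k:ℝ)) (div_nonneg ht0 (by linarith))
          (le_trans (div_le_self ht0 hkR) (le_trans hts hs1))]⟩
    · rintro ⟨k, t, hk, ht0, hts, rfl⟩
      have hkR : (1:ℝ) ≤ (k:ℝ) := by exact_mod_cast hk
      exact ⟨k, t, hk, ht0, hts, by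
        rw [hqr (t/(k:ℝ)) (div_nonneg ht0 (by linarith))
          (le_trans (div_le_self ht0 hkR) (le_trans hts hs1))]⟩
  have hIQstar : ∀ x : ℝ, 0 ≤ x → x ≤ 1 → α * x ≤ pstar x ∧ pstar x ≤ c x :=
    fun x h0 h1 => hp_mem x (Set.mem_Icc.2 ⟨h0, h1⟩)
  have hpIQ : ∀ x : ℝ, 0 ≤ x → x ≤ 1 → α * x ≤ p x ∧ p x ≤ c x :=
    fun x h0 h1 => hpmem x (Set.mem_Icc.2 ⟨h0, h1⟩)
  have hstar_iter : ∀ n : ℕ, ∀ s : ℝ, 0 ≤ s → s ≤ 1 →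
      (Tmap c g δ)^[n] pstar s = pstar s := by
    intro n
    induction n with
    | zero => intro s _ _; simp
    | succ n ih =>
      intro s hs0 hs1
      rw [Function.iterate_succ_apply']
      rw [hcongr _ pstar ih s hs0 hs1]
      exact hp_fix s (Set.mem_Icc.2 ⟨hs0, hs1⟩)
  -- upper bound on Tmap by a specific element
  have hTle : ∀ q : ℝ → ℝ, (∀ x, 0 ≤ x → x ≤ 1 → α * x ≤ q x ∧ q x ≤ c x) →
      ∀ s : ℝ, 0 ≤ s → s ≤ 1 → ∀ k : ℕ, ∀ t : ℝ, 1 ≤ k → 0 ≤ t → t ≤ s →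
      Tmap c g δ q s ≤ c (s - t) + g k + δ * k * q (t / k) := by
    intro q hq s hs0 hs1 k t hk ht0 hts
    simp only [Tmap]
    exact csInf_le (hbdd q hq s hs0 hs1) ⟨k, t, hk, ht0, hts, rfl⟩
  -- THE KEY INDUCTION
  have key : ∀ q0 : ℝ → ℝ, (∀ x, 0 ≤ x → x ≤ 1 → α * x ≤ q0 x ∧ q0 x ≤ c x) →
      ∀ n : ℕ, ∀ s : ℝ, 0 ≤ s → s ≤ 1 → ∀ ε : ℝ, 0 < ε →
      ∃ K : ℕ, ∃ σ : ℝ, 1 ≤ K ∧ 0 ≤ σ ∧ σ ≤ 1 ∧ (K:ℝ) * σ ≤ s ∧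
        δ ^ n * K * (α * σ) ≤ (Tmap c g δ)^[n] q0 s + ε ∧
        ∀ r : ℝ → ℝ, (∀ x, 0 ≤ x → x ≤ 1 → α * x ≤ r x ∧ r x ≤ c x) →
          (Tmap c g δ)^[n] r s ≤ (Tmap c g δ)^[n] q0 s + δ ^ n * K * (c σ - α * σ) + ε := by
    intro q0 hq0 n
    induction n with
    | zero =>
      intro s hs0 hs1 ε hε
      refine ⟨1, s, le_rfl, hs0, hs1, by norm_num, ?_, ?_⟩
      · simp only [pow_zero, Nat.cast_one, one_mul, Function.iterate_zero, id_eq]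
        linarith [(hq0 s hs0 hs1).1]
      · intro r hr
        simp only [pow_zero, Nat.cast_one, one_mul, Function.iterate_zero, id_eq]
        linarith [(hr s hs0 hs1).2, (hq0 s hs0 hs1).1]
    | succ n ih =>
      intro s hs0 hs1 ε hε
      have hPI := hIiter q0 hq0 n
      set P := (Tmap c g δ)^[n] q0 with hP
      obtain ⟨y, hymem, hylt⟩ :=
        Real.lt_sInf_add_pos (s := {y : ℝ | ∃ k : ℕ, ∃ t : ℝ, 1 ≤ k ∧ 0 ≤ t ∧ t ≤ s ∧
          y = c (s - t) + g k + δ * k * P (t / k)}) ⟨_, hne P s hs0⟩ (half_pos hε)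
      obtain ⟨k, t, hk, ht0, hts, hyeq⟩ := hymem
      have hsInf : (Tmap c g δ)^[n+1] q0 s =
          sInf {y : ℝ | ∃ k : ℕ, ∃ t : ℝ, 1 ≤ k ∧ 0 ≤ t ∧ t ≤ s ∧
            y = c (s - t) + g k + δ * k * P (t / k)} := by
        rw [Function.iterate_succ_apply']
        simp only [Tmap, hP]
      rw [← hsInf] at hylt
      have hkR : (1:ℝ) ≤ (k:ℝ) := by exact_mod_cast hk
      have hk0 : (0:ℝ) < (k:ℝ) := lt_of_lt_of_le one_pos hkR
      have htk0 : 0 ≤ t / (k:ℝ) := div_nonneg ht0 hk0.le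
      have htk1 : t / (k:ℝ) ≤ 1 := le_trans (div_le_self ht0 hkR) (le_trans hts hs1)
      have hδn1 : (0:ℝ) < δ ^ (n+1) := pow_pos hδ0 _
      have hδn : (1:ℝ) ≤ δ ^ n := one_le_pow₀ hδ1
      set ε' := ε / (2 * δ ^ (n+1) * (k:ℝ)) with hε'def
      have hε' : 0 < ε' := by positivity
      obtain ⟨K₀, σ, hK₀, hσ0, hσ1, hKσ, hbud, hcmp⟩ := ih (t/(k:ℝ)) htk0 htk1 ε' hε'
      have hK₀R : (1:ℝ) ≤ (K₀:ℝ) := by exact_mod_cast hK₀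
      refine ⟨k * K₀, σ, ?_, hσ0, hσ1, ?_, ?_, ?_⟩
      · exact Nat.one_le_iff_ne_zero.2 (Nat.mul_ne_zero (by omega) (by omega))
      · -- (k*K₀) * σ ≤ s
        push_cast
        have h6 : (k:ℝ) * ((K₀:ℝ) * σ) ≤ (k:ℝ) * (t/(k:ℝ)) :=
          mul_le_mul_of_nonneg_left hKσ hk0.le
        have h7 : (k:ℝ) * (t/(k:ℝ)) = t := by field_simp
        calc (k:ℝ) * (K₀:ℝ) * σ = (k:ℝ) * ((K₀:ℝ) * σ) := by ring
          _ ≤ t := by rw [← h7]; exact h6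
          _ ≤ s := hts
      · -- budget
        have hst0 : 0 ≤ s - t := by linarith
        have hst1 : s - t ≤ 1 := by linarith
        have hcst : 0 ≤ c (s - t) := hcpos _ hst0 hst1
        have hgk : 0 ≤ g k := hg_nonneg k hk
        have hmul : δ * (k:ℝ) * (δ ^ n * (K₀:ℝ) * (α * σ)) ≤
            δ * (k:ℝ) * (P (t/(k:ℝ)) + ε') :=
          mul_le_mul_of_nonneg_left hbud (by positivity)
        have heps : δ * (k:ℝ) * ε' = ε / (2 * δ ^ n) := by
          rw [hε'def]
          field_simp
          ring
        have heps2 : ε / (2 * δ ^ n) ≤ ε / 2 := by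
          have h2d : (2:ℝ) ≤ 2 * δ ^ n := by nlinarith
          exact div_le_div_of_nonneg_left hε.le (by norm_num) h2d
        have hform : δ ^ (n+1) * ((k * K₀ : ℕ):ℝ) * (α * σ) =
            δ * (k:ℝ) * (δ ^ n * (K₀:ℝ) * (α * σ)) := by
          push_cast
          ring
        have hyP : δ * (k:ℝ) * P (t/(k:ℝ)) = y - c (s - t) - g k := by
          rw [hyeq]; ring
        have hmul2 : δ * (k:ℝ) * (P (t/(k:ℝ)) + ε') =
            δ * (k:ℝ) * P (t/(k:ℝ)) + δ * (k:ℝ) * ε' := by ring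
        rw [hform]
        rw [hmul2, hyP, heps] at hmul
        linarith
      · -- comparison
        intro r hr
        have hRI := hIiter r hr n
        have hstep : (Tmap c g δ)^[n+1] r s ≤
            c (s - t) + g k + δ * (k:ℝ) * ((Tmap c g δ)^[n] r (t/(k:ℝ))) := by
          rw [Function.iterate_succ_apply']
          exact hTle _ hRI s hs0 hs1 k t hk ht0 hts
        have hc1 := hcmp r hr
        have hmul : δ * (k:ℝ) * ((Tmap c g δ)^[n] r (t/(k:ℝ))) ≤
            δ * (k:ℝ) * (P (t/(k:ℝ)) + (δ ^ n * (K₀:ℝ) * (c σ - α * σ) + ε')) := by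
          apply mul_le_mul_of_nonneg_left _ (by positivity)
          linarith
        have heps : δ * (k:ℝ) * ε' = ε / (2 * δ ^ n) := by
          rw [hε'def]
          field_simp
          ring
        have heps2 : ε / (2 * δ ^ n) ≤ ε / 2 := by
          have h2d : (2:ℝ) ≤ 2 * δ ^ n := by nlinarith
          exact div_le_div_of_nonneg_left hε.le (by norm_num) h2d
        have hexp : δ * (k:ℝ) * (P (t/(k:ℝ)) + (δ ^ n * (K₀:ℝ) * (c σ - α * σ) + ε')) =
            δ * (k:ℝ) * P (t/(k:ℝ)) + δ ^ (n+1) * ((k * K₀ : ℕ):ℝ) * (c σ - α * σ)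
              + δ * (k:ℝ) * ε' := by
          push_cast
          ring
        have hyP : c (s - t) + g k + δ * (k:ℝ) * P (t/(k:ℝ)) = y := hyeq.symm
        rw [hexp, heps] at hmul
        linarith
  -- FINAL ASSEMBLY
  rw [Metric.tendstoUniformlyOn_iff]
  intro η hη
  have hc1pos : 0 < c 1 + 1 := by nlinarith [hcx 1 zero_le_one le_rfl]
  set C := (c 1 + 1) / α with hCdef
  have hC : 0 < C := div_pos hc1pos hα
  set η' := η / (4 * (C + 1)) with hη'def
  have hη'pos : 0 < η' := by positivity
  have hθt : Tendsto (fun x : ℝ => c x / x - α) (𝓝[>] (0:ℝ)) (𝓝 0) := by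
    have h := hslope_t.sub_const α
    simpa using h
  have hev : ∀ᶠ x in 𝓝[>] (0:ℝ), c x / x - α < η' := by
    have hmem : Iio η' ∈ 𝓝 (0:ℝ) := Iio_mem_nhds hη'pos
    exact hθt hmem
  obtain ⟨b, hb, hbsub⟩ := mem_nhdsGT_iff_exists_Ioo_subset.1 hev
  rw [Set.mem_Ioi] at hb
  have hpow : Tendsto (fun n : ℕ => δ ^ n) atTop atTop :=
    tendsto_pow_atTop_atTop_of_one_lt hδ
  obtain ⟨N, hN⟩ := Filter.eventually_atTop.1 (hpow.eventually_gt_atTop (C / b))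
  rw [eventually_atTop]
  refine ⟨N, fun n hn x hx => ?_⟩
  obtain ⟨hx0, hx1⟩ := Set.mem_Icc.1 hx
  set ε : ℝ := min 1 (η/4) with hεdef
  have hεpos : 0 < ε := lt_min one_pos (by positivity)
  have hε1 : ε ≤ 1 := min_le_left _ _
  have hεη : ε ≤ η/4 := min_le_right _ _
  -- the main smallness bound
  have main : ∀ K : ℕ, ∀ σ : ℝ, 1 ≤ K → 0 ≤ σ → σ ≤ 1 →
      δ ^ n * K * (α * σ) ≤ c 1 + 1 → δ ^ n * K * (c σ - α * σ) < η / 4 := by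
    intro K σ hK hσ0 hσ1 hbud
    rcases eq_or_lt_of_le hσ0 with h | h
    · rw [← h]
      simp [hc0]
      linarith
    · have hKR : (1:ℝ) ≤ (K:ℝ) := by exact_mod_cast hK
      have hδn : (1:ℝ) ≤ δ ^ n := one_le_pow₀ hδ1
      have hδnp : (0:ℝ) < δ ^ n := by positivity
      have hσb : σ < b := by
        have h1 : δ ^ n * (α * σ) ≤ δ ^ n * (K:ℝ) * (α * σ) := by
          nlinarith [mul_nonneg (mul_nonneg hδnp.le (mul_nonneg hα.le hσ0))
            (sub_nonneg.2 hKR)]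
        have h2 : δ ^ n * (α * σ) ≤ c 1 + 1 := le_trans h1 hbud
        have h3 : C / b < δ ^ n := hN n hn
        have h4 : σ ≤ C / δ ^ n := by
          rw [le_div_iff₀ hδnp, hCdef, le_div_iff₀ hα]
          nlinarith
        have h5 : C / δ ^ n < b := by
          rw [div_lt_iff₀ hδnp]
          rw [div_lt_iff₀ hb] at h3
          linarith
        linarith
      have hθσ : c σ / σ - α < η' := hbsub ⟨h, hσb⟩
      have hwnn : 0 ≤ c σ - α * σ := by linarith [hcx σ hσ0 hσ1]
      have hθnn : 0 ≤ c σ / σ - α := by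
        rw [sub_nonneg, le_div_iff₀ h]
        linarith [hcx σ hσ0 hσ1]
      have heq : δ ^ n * (K:ℝ) * (c σ - α * σ) =
          (δ ^ n * (K:ℝ) * (α * σ)) * ((c σ / σ - α) / α) := by
        field_simp
      rw [heq]
      have h6 : 0 ≤ (c σ / σ - α) / α := div_nonneg hθnn hα.le
      have hCη : C * η' < η / 4 := by
        have h7 : C * η' = η/4 * (C/(C+1)) := by
          rw [hη'def]
          field_simp
        have h8 : C/(C+1) < 1 := (div_lt_one (by linarith)).2 (by linarith)
        rw [h7]
        nlinarith [hη]
      calc (δ ^ n * (K:ℝ) * (α * σ)) * ((c σ / σ - α) / α)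
          ≤ (c 1 + 1) * ((c σ / σ - α) / α) := mul_le_mul_of_nonneg_right hbud h6
        _ ≤ (c 1 + 1) * (η' / α) := by
            apply mul_le_mul_of_nonneg_left _ hc1pos.le
            exact (div_le_div_iff_of_pos_right hα).2 hθσ.le
        _ = C * η' := by rw [hCdef]; field_simp
        _ < η / 4 := hCη
  obtain ⟨K1, σ1, hK1, hσ10, hσ11, _, hbud1, hcmp1⟩ := key p hpIQ n x hx0 hx1 ε hεpos
  obtain ⟨K2, σ2, hK2, hσ20, hσ21, _, hbud2, hcmp2⟩ := key pstar hIQstar n x hx0 hx1 ε hεpos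
  have hb1 : δ ^ n * K1 * (α * σ1) ≤ c 1 + 1 := by
    have h1 := (hIiter p hpIQ n x hx0 hx1).2
    have h2 := hmonoC x hx0 hx1
    linarith
  have hb2 : δ ^ n * K2 * (α * σ2) ≤ c 1 + 1 := by
    have h1 := hstar_iter n x hx0 hx1
    have h2 := (hIQstar x hx0 hx1).2
    have h3 := hmonoC x hx0 hx1
    rw [h1] at hbud2
    linarith
  have hm1 := main K1 σ1 hK1 hσ10 hσ11 hb1
  have hm2 := main K2 σ2 hK2 hσ20 hσ21 hb2
  have hd1 := hcmp1 pstar hIQstar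
  have hd2 := hcmp2 p hpIQ
  rw [hstar_iter n x hx0 hx1] at hd1 hd2
  rw [Real.dist_eq, abs_sub_lt_iff]
  constructor
  · linarith
  · linarith
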